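/- Every monotone Λ-structure T admits a set R of monotone one-step tableau rules that is both one-step tableau sound and one-step tableau complete with respect to T; moreover R can be chosen closed under contraction. -/

import Mathlib

universe u

/-- A modal atom `♡(p₁,…,pₙ)` or its dual `♡̄(p₁,…,pₙ)` over variables `V`. -/
structure MAtom (Λ : Type) (ar : Λ → ℕ) (V : Type) where
  dual : Bool
  op : Λ
  args : Fin (ar op) → V

variable {Λ : Type} {ar : Λ → ℕ} {V : Type}

/-- Interpretation of a modal atom over `T X` given a lifting for each operator
and a valuation `τ`; dual atoms are interpreted by the dual lifting. -/
def AtomSem (T : Type u → Type u)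
    (lift : ∀ (l : Λ) (X : Type u), (Fin (ar l) → Set X) → Set (T X))
    (X : Type u) (τ : V → Set X) (a : MAtom Λ ar V) : Set (T X) :=
  if a.dual then (lift a.op X (fun i => (τ (a.args i))ᶜ))ᶜ
  else lift a.op X (fun i => τ (a.args i))

/-- Interpretation `⟦Γ⟧_{TX,τ}` of a modalised sequent. -/
def SeqSem (T : Type u → Type u)
    (lift : ∀ (l : Λ) (X : Type u), (Fin (ar l) → Set X) → Set (T X))
    (X : Type u) (τ : V → Set X) (Γ : Set (MAtom Λ ar V)) : Set (T X) :=
  ⋂ a ∈ Γ, AtomSem T lift X τ a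

/-- The variables occurring in a modalised sequent. -/
def SeqVars (Γ : Set (MAtom Λ ar V)) : Set V :=
  {p | ∃ a ∈ Γ, ∃ i, a.args i = p}

open scoped Classical

/-- A one-step tableau rule: a premise of modal atoms over variables `ℕ`
and a finite list of propositional conclusions. -/
structure OneStepRule (Λ : Type) (ar : Λ → ℕ) where
  prem : Finset (MAtom Λ ar ℕ)
  concl : List (Finset ℕ)

/-- Apply a renaming to a modal atom. -/
def MAtom.rename (σ : ℕ → ℕ) (a : MAtom Λ ar ℕ) : MAtom Λ ar ℕ :=
  ⟨a.dual, a.op, σ ∘ a.args⟩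

/-- A rule is a monotone one-step tableau rule: no negated variables (built into
`MAtom`-sequents of variables), every variable occurs at most once in the premise,
and all conclusion variables occur in the premise. -/
def MonotoneRule (r : OneStepRule Λ ar) : Prop :=
  (r.prem.val.bind (fun a => ((List.ofFn a.args : List ℕ) : Multiset ℕ))).Nodup ∧
  ∀ Δ ∈ r.concl, ∀ p ∈ Δ, p ∈ SeqVars (↑r.prem : Set (MAtom Λ ar ℕ))

/-- One-step tableau soundness of a rule set for the structure `(T, lift)`. -/
def OneStepTabSound (T : Type u → Type u)
    (lift : ∀ (l : Λ) (X : Type u), (Fin (ar l) → Set X) → Set (T X))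
    (R : Set (OneStepRule Λ ar)) : Prop :=
  ∀ (X : Type u) (τ : ℕ → Set X) (Γ : Finset (MAtom Λ ar ℕ)),
    SeqSem T lift X τ (↑Γ : Set (MAtom Λ ar ℕ)) ≠ ∅ →
    ∀ r ∈ R, ∀ σ : ℕ → ℕ, r.prem.image (MAtom.rename σ) ⊆ Γ →
      ∃ Δ ∈ r.concl, (⋂ p ∈ Δ, τ (σ p)) ≠ ∅

/-- One-step tableau completeness of a rule set for the structure `(T, lift)`. -/
def OneStepTabComplete (T : Type u → Type u)
    (lift : ∀ (l : Λ) (X : Type u), (Fin (ar l) → Set X) → Set (T X))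
    (R : Set (OneStepRule Λ ar)) : Prop :=
  ∀ (X : Type u) (τ : ℕ → Set X) (Γ : Finset (MAtom Λ ar ℕ)),
    (∀ r ∈ R, ∀ σ : ℕ → ℕ, r.prem.image (MAtom.rename σ) ⊆ Γ →
      ∃ Δ ∈ r.concl, (⋂ p ∈ Δ, τ (σ p)) ≠ ∅) →
    SeqSem T lift X τ (↑Γ : Set (MAtom Λ ar ℕ)) ≠ ∅

/-- Closure under contraction: every instance of a rule under an identifying
renaming can be replaced by a non-identifying instance of another rule whose
premise is contained in the original instantiated premise and whose conclusions
contain the original ones. -/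
def ContractionClosed (R : Set (OneStepRule Λ ar)) : Prop :=
  ∀ r ∈ R, ∀ σ : ℕ → ℕ, ∃ r' ∈ R, ∃ τ' : ℕ → ℕ,
    (∀ a ∈ r'.prem, ∀ b ∈ r'.prem, MAtom.rename τ' a = MAtom.rename τ' b → a = b) ∧
    r'.prem.image (MAtom.rename τ') ⊆ r.prem.image (MAtom.rename σ) ∧
    ∀ Δ ∈ r.concl, ∃ Δ' ∈ r'.concl, Δ.image σ ⊆ Δ'.image τ'

section TabAux

lemma matom_ext {a b : MAtom Λ ar ℕ} (hd : a.dual = b.dual) (ho : a.op = b.op)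
    (ha : ∀ (i : Fin (ar a.op)) (j : Fin (ar b.op)), i.val = j.val → a.args i = b.args j) :
    a = b := by
  obtain ⟨d, o, f⟩ := a
  obtain ⟨d', o', f'⟩ := b
  dsimp only at hd ho ha
  subst hd; subst ho
  have : f = f' := funext fun i => ha i i rfl
  rw [this]

lemma atomSem_rename (T : Type u → Type u)
    (lift : ∀ (l : Λ) (X : Type u), (Fin (ar l) → Set X) → Set (T X))
    (X : Type u) (τ : ℕ → Set X) (σ : ℕ → ℕ) (a : MAtom Λ ar ℕ) :
    AtomSem T lift X τ (MAtom.rename σ a) = AtomSem T lift X (fun p => τ (σ p)) a := rfl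

lemma mem_seqSem {T : Type u → Type u}
    {lift : ∀ (l : Λ) (X : Type u), (Fin (ar l) → Set X) → Set (T X)}
    {X : Type u} {τ : ℕ → Set X} {S : Set (MAtom Λ ar ℕ)} {t : T X} :
    t ∈ SeqSem T lift X τ S ↔ ∀ a ∈ S, t ∈ AtomSem T lift X τ a := by
  simp [SeqSem]

lemma seqSem_mono {T : Type u → Type u}
    {lift : ∀ (l : Λ) (X : Type u), (Fin (ar l) → Set X) → Set (T X)}
    {X : Type u} {τ : ℕ → Set X} {S S' : Set (MAtom Λ ar ℕ)} (h : S ⊆ S') :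
    SeqSem T lift X τ S' ⊆ SeqSem T lift X τ S :=
  fun _ ht => mem_seqSem.mpr fun a ha => mem_seqSem.mp ht a (h ha)

lemma seqSem_image (T : Type u → Type u)
    (lift : ∀ (l : Λ) (X : Type u), (Fin (ar l) → Set X) → Set (T X))
    (X : Type u) (τ : ℕ → Set X) (σ : ℕ → ℕ) (S : Set (MAtom Λ ar ℕ)) :
    SeqSem T lift X τ (MAtom.rename σ '' S) = SeqSem T lift X (fun p => τ (σ p)) S := by
  ext t
  rw [mem_seqSem, mem_seqSem, Set.forall_mem_image]
  exact forall₂_congr fun a _ => by rw [atomSem_rename]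

/-- Freshening of an atom at index `j`. -/
def freshA (j : ℕ) (b : MAtom Λ ar ℕ) : MAtom Λ ar ℕ :=
  ⟨b.dual, b.op, fun i => Nat.pair j i.val⟩

/-- The renaming mapping fresh variables back to the original ones. -/
def backR (L : List (MAtom Λ ar ℕ)) (p : ℕ) : ℕ :=
  (Option.map (fun b : MAtom Λ ar ℕ =>
    if h : p.unpair.2 < ar b.op then b.args ⟨p.unpair.2, h⟩ else 0)
    L[p.unpair.1]?).getD 0

lemma backR_pair (L : List (MAtom Λ ar ℕ)) (j : Fin L.length) (i : ℕ)
    (hi : i < ar (L.get j).op) :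
    backR L (Nat.pair j.val i) = (L.get j).args ⟨i, hi⟩ := by
  unfold backR
  rw [Nat.unpair_pair]
  have hget : L[(j.val : ℕ)]? = some (L.get j) := by
    rw [List.getElem?_eq_getElem j.isLt]
    rfl
  rw [hget]
  have hi' : i < ar (L[(j.val : ℕ)]).op := hi
  show (if h : i < ar (L[(j.val : ℕ)]).op then L[(j.val : ℕ)].args ⟨i, h⟩ else 0) =
    (L.get j).args ⟨i, hi⟩
  rw [dif_pos hi']
  simp only [List.get_eq_getElem]

lemma rename_backR_freshA (L : List (MAtom Λ ar ℕ)) (j : Fin L.length) :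
    MAtom.rename (backR L) (freshA j.val (L.get j)) = L.get j := by
  apply matom_ext
  · rfl
  · rfl
  · intro i k hik
    show backR L (Nat.pair j.val i.val) = (L.get j).args k
    have hi : (i : ℕ) < ar (L.get j).op := i.isLt
    rw [backR_pair L j i.val hi]
    exact congrArg (L.get j).args (Fin.ext hik)

/-- Fresh variant of a list of atoms: each atom gets its own disjoint supply
of variables. -/
def freshL (L : List (MAtom Λ ar ℕ)) : List (MAtom Λ ar ℕ) :=
  List.ofFn fun j : Fin L.length => freshA j.val (L.get j)

lemma freshL_nodup (L : List (MAtom Λ ar ℕ)) (hL : L.Nodup) : (freshL L).Nodup := by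
  rw [freshL, List.nodup_ofFn]
  intro j k h
  have h' : freshA j.val (L.get j) = freshA k.val (L.get k) := h
  have hop' := congrArg MAtom.op h'
  have hop : (L.get j).op = (L.get k).op := hop'
  have hdu' := congrArg MAtom.dual h'
  have hdu : (L.get j).dual = (L.get k).dual := hdu' 
  rcases Nat.eq_zero_or_pos (ar (L.get j).op) with hz | hpos
  · have : L.get j = L.get k := by
      apply matom_ext hdu hop
      intro i _ _
      exact absurd i.isLt (by omega)
    exact List.nodup_iff_injective_get.mp hL this
  · have h2 := congrArg
      (fun x : MAtom Λ ar ℕ => if h : 0 < ar x.op then x.args ⟨0, h⟩ else 0) h' 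
    have hpos' : 0 < ar (L.get k).op := hop ▸ hpos
    simp only [freshA, hpos, hpos', dif_pos] at h2
    have h3 : Nat.pair j.val 0 = Nat.pair k.val 0 :=
      (dif_pos hpos).symm.trans (h2.trans (dif_pos hpos'))
    exact Fin.ext (Nat.pair_eq_pair.mp h3).1

/-- The canonical premise with pairwise distinct variables renaming onto `P`. -/
noncomputable def canonPrem (P : Finset (MAtom Λ ar ℕ)) : Finset (MAtom Λ ar ℕ) :=
  ⟨((freshL P.toList : List (MAtom Λ ar ℕ)) : Multiset (MAtom Λ ar ℕ)),
    (Multiset.coe_nodup).mpr (freshL_nodup _ P.nodup_toList)⟩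

lemma mem_canonPrem {P : Finset (MAtom Λ ar ℕ)} {a : MAtom Λ ar ℕ} :
    a ∈ canonPrem P ↔ ∃ j : Fin P.toList.length, freshA j.val (P.toList.get j) = a := by
  constructor
  · intro h
    obtain ⟨j, hj⟩ := List.mem_ofFn.mp (Multiset.mem_coe.mp h)
    exact ⟨j, hj⟩
  · rintro ⟨j, rfl⟩
    exact Multiset.mem_coe.mpr (List.mem_ofFn.mpr ⟨j, rfl⟩)

lemma canonPrem_image_back (P : Finset (MAtom Λ ar ℕ)) :
    (canonPrem P).image (MAtom.rename (backR P.toList)) = P := by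
  ext b
  rw [Finset.mem_image]
  constructor
  · rintro ⟨a, ha, rfl⟩
    obtain ⟨j, rfl⟩ := mem_canonPrem.mp ha
    rw [rename_backR_freshA]
    exact Finset.mem_toList.mp (P.toList.get_mem j)
  · intro hb
    obtain ⟨j, hj⟩ := List.mem_iff_get.mp (Finset.mem_toList.mpr hb)
    exact ⟨freshA j.val (P.toList.get j), mem_canonPrem.mpr ⟨j, rfl⟩,
      by rw [rename_backR_freshA, hj]⟩

/-- The variables of the canonical premise. -/
noncomputable def varsF (P : Finset (MAtom Λ ar ℕ)) : Finset ℕ :=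
  (canonPrem P).biUnion fun a => Finset.image a.args Finset.univ

lemma mem_varsF {P : Finset (MAtom Λ ar ℕ)} {q : ℕ} :
    q ∈ varsF P ↔ ∃ a ∈ canonPrem P, ∃ i, a.args i = q := by
  simp [varsF]

lemma varsF_seqVars {P : Finset (MAtom Λ ar ℕ)} {q : ℕ} (h : q ∈ varsF P) :
    q ∈ SeqVars (↑(canonPrem P) : Set (MAtom Λ ar ℕ)) := by
  obtain ⟨a, ha, i, hi⟩ := mem_varsF.mp h
  exact ⟨a, Finset.mem_coe.mpr ha, i, hi⟩

lemma canon_monoNodup (P : Finset (MAtom Λ ar ℕ)) :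
    ((canonPrem P).val.bind
      (fun a => ((List.ofFn a.args : List ℕ) : Multiset ℕ))).Nodup := by
  show (((freshL P.toList : List (MAtom Λ ar ℕ)) : Multiset (MAtom Λ ar ℕ)).bind
      (fun a => ((List.ofFn a.args : List ℕ) : Multiset ℕ))).Nodup
  rw [Multiset.coe_bind, Multiset.coe_nodup, List.nodup_flatMap]
  constructor
  · intro x hx
    obtain ⟨j, rfl⟩ := List.mem_ofFn.mp hx
    rw [List.nodup_ofFn]
    intro i k hik
    exact Fin.ext (Nat.pair_eq_pair.mp hik).2
  · rw [freshL, List.pairwise_ofFn]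
    intro j k hjk
    intro x hx hx'
    obtain ⟨i, rfl⟩ := List.mem_ofFn.mp hx
    obtain ⟨i', hi'⟩ := List.mem_ofFn.mp hx'
    have := (Nat.pair_eq_pair.mp hi').1
    omega

lemma prem_args_inj {prem : Finset (MAtom Λ ar ℕ)}
    (h : (prem.val.bind (fun a => ((List.ofFn a.args : List ℕ) : Multiset ℕ))).Nodup)
    {a : MAtom Λ ar ℕ} (ha : a ∈ prem) : Function.Injective a.args := by
  rw [← Multiset.cons_erase (Finset.mem_val.mpr ha), Multiset.cons_bind,
    Multiset.nodup_add] at h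
  have := h.1
  rw [Multiset.coe_nodup, List.nodup_ofFn] at this
  exact this

lemma prem_unique {prem : Finset (MAtom Λ ar ℕ)}
    (h : (prem.val.bind (fun a => ((List.ofFn a.args : List ℕ) : Multiset ℕ))).Nodup)
    {a b : MAtom Λ ar ℕ} (ha : a ∈ prem) (hb : b ∈ prem)
    {i : Fin (ar a.op)} {k : Fin (ar b.op)} (he : a.args i = b.args k) : a = b := by
  by_contra hne
  have hb' : b ∈ prem.val.erase a :=
    (Multiset.mem_erase_of_ne (Ne.symm hne)).mpr (Finset.mem_val.mpr hb)
  rw [← Multiset.cons_erase (Finset.mem_val.mpr ha), Multiset.cons_bind,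
    Multiset.nodup_add] at h
  exact Multiset.disjoint_left.mp h.2.2
    (Multiset.mem_coe.mpr (List.mem_ofFn.mpr ⟨i, rfl⟩))
    (Multiset.mem_bind.mpr ⟨b, hb',
      Multiset.mem_coe.mpr (List.mem_ofFn.mpr ⟨k, he.symm⟩)⟩)


lemma canon_sound (T : Type u → Type u) (Tmap : ∀ {X Y : Type u}, (X → Y) → T X → T Y)
    (lift : ∀ (l : Λ) (X : Type u), (Fin (ar l) → Set X) → Set (T X))
    (hnat : ∀ (l : Λ) (X Y : Type u) (f : Y → X) (A : Fin (ar l) → Set X),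
      Tmap f ⁻¹' lift l X A = lift l Y (fun i => f ⁻¹' A i))
    (hmono : ∀ (l : Λ) (X : Type u) (A B : Fin (ar l) → Set X),
      (∀ i, A i ⊆ B i) → lift l X A ⊆ lift l X B)
    (X : Type u) (τ : ℕ → Set X) (P : Finset (MAtom Λ ar ℕ))
    (hP : SeqSem T lift X τ (↑P : Set (MAtom Λ ar ℕ)) = ∅)
    (Y : Type u) (ρ : ℕ → Set Y)
    (hne : SeqSem T lift Y ρ (↑(canonPrem P) : Set (MAtom Λ ar ℕ)) ≠ ∅) :
    ∃ Δ ∈ ((varsF P).powerset.filter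
        fun Δ => (⋂ p ∈ Δ, τ (backR P.toList p)) = ∅).toList,
      (⋂ p ∈ Δ, ρ p) ≠ ∅ := by
  by_contra hcon
  push_neg at hcon
  obtain ⟨t, ht⟩ := Set.nonempty_iff_ne_empty.mpr hne
  have hDy : ∀ y : Y,
      (⋂ p ∈ (varsF P).filter (fun q => y ∈ ρ q), τ (backR P.toList p)).Nonempty := by
    intro y
    rw [Set.nonempty_iff_ne_empty]
    intro hemp
    have hmem : (varsF P).filter (fun q => y ∈ ρ q) ∈
        ((varsF P).powerset.filter
          fun Δ => (⋂ p ∈ Δ, τ (backR P.toList p)) = ∅).toList :=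
      Finset.mem_toList.mpr (Finset.mem_filter.mpr
        ⟨Finset.mem_powerset.mpr (Finset.filter_subset _ _), hemp⟩)
    have h0 := hcon _ hmem
    have hy : y ∈ ⋂ p ∈ (varsF P).filter (fun q => y ∈ ρ q), ρ p :=
      Set.mem_iInter₂.mpr fun p hp => (Finset.mem_filter.mp hp).2
    rw [h0] at hy
    exact hy
  choose f hf using hDy
  have key : ∀ q ∈ varsF P, ρ q ⊆ f ⁻¹' τ (backR P.toList q) := by
    intro q hq y hy
    exact Set.mem_iInter₂.mp (hf y) q (Finset.mem_filter.mpr ⟨hq, hy⟩)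
  have hmem2 : Tmap f t ∈
      SeqSem T lift X (fun p => τ (backR P.toList p)) (↑(canonPrem P) : Set (MAtom Λ ar ℕ)) := by
    rw [mem_seqSem]
    intro c hc
    have hct : t ∈ AtomSem T lift Y ρ c := mem_seqSem.mp ht c hc
    have hargs : ∀ i, c.args i ∈ varsF P :=
      fun i => mem_varsF.mpr ⟨c, Finset.mem_coe.mp hc, i, rfl⟩
    by_cases hd : c.dual = true
    · simp only [AtomSem, if_pos hd] at hct ⊢
      rw [Set.mem_compl_iff] at hct ⊢
      intro hbad
      apply hct
      have h1 : t ∈ Tmap f ⁻¹' lift c.op X (fun i => (τ (backR P.toList (c.args i)))ᶜ) := hbad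
      rw [hnat] at h1
      refine hmono c.op Y _ _ (fun i => ?_) h1
      rw [Set.preimage_compl]
      exact Set.compl_subset_compl.mpr (key _ (hargs i))
    · simp only [AtomSem, if_neg hd] at hct ⊢
      rw [← Set.mem_preimage, hnat]
      exact hmono c.op Y _ _ (fun i => key _ (hargs i)) hct
  have hemp2 : SeqSem T lift X (fun p => τ (backR P.toList p))
      (↑(canonPrem P) : Set (MAtom Λ ar ℕ)) = ∅ := by
    rw [← seqSem_image, ← Finset.coe_image, canonPrem_image_back]
    exact hP
  rw [hemp2] at hmem2
  exact hmem2


end TabAux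

/-- Every monotone `Λ`-structure admits a one-step tableau sound and complete set
of monotone one-step tableau rules, which may moreover be chosen contraction closed. -/
theorem exists_sound_complete_rule_set
    (T : Type u → Type u) (Tmap : ∀ {X Y : Type u}, (X → Y) → T X → T Y)
    (lift : ∀ (l : Λ) (X : Type u), (Fin (ar l) → Set X) → Set (T X))
    (hnat : ∀ (l : Λ) (X Y : Type u) (f : Y → X) (A : Fin (ar l) → Set X),
      Tmap f ⁻¹' lift l X A = lift l Y (fun i => f ⁻¹' A i))
    (hmono : ∀ (l : Λ) (X : Type u) (A B : Fin (ar l) → Set X),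
      (∀ i, A i ⊆ B i) → lift l X A ⊆ lift l X B) :
    ∃ R : Set (OneStepRule Λ ar), (∀ r ∈ R, MonotoneRule r) ∧
      OneStepTabSound T lift R ∧ OneStepTabComplete T lift R ∧
      ContractionClosed R := by
  refine ⟨{r | MonotoneRule r ∧ ∀ (X : Type u) (ρ : ℕ → Set X),
      SeqSem T lift X ρ (↑r.prem : Set (MAtom Λ ar ℕ)) ≠ ∅ →
      ∃ Δ ∈ r.concl, (⋂ p ∈ Δ, ρ p) ≠ ∅}, fun r hr => hr.1, ?_, ?_, ?_⟩
  · -- soundness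
    intro X τ Γ hΓ r hr σ himg
    have h1 : SeqSem T lift X (fun p => τ (σ p)) (↑r.prem : Set (MAtom Λ ar ℕ)) ≠ ∅ := by
      rw [← seqSem_image, ← Finset.coe_image]
      intro hemp
      apply hΓ
      have h2 := seqSem_mono (T := T) (lift := lift) (τ := τ)
        (Finset.coe_subset.mpr himg)
      rw [hemp] at h2
      exact Set.subset_empty_iff.mp h2
    exact hr.2 X (fun p => τ (σ p)) h1
  · -- completeness
    intro X τ Γ H
    intro hemp
    have hmemR : (⟨canonPrem Γ, ((varsF Γ).powerset.filter
        fun Δ => (⋂ p ∈ Δ, τ (backR Γ.toList p)) = ∅).toList⟩ : OneStepRule Λ ar) ∈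
        {r : OneStepRule Λ ar | MonotoneRule r ∧ ∀ (X : Type u) (ρ : ℕ → Set X),
          SeqSem T lift X ρ (↑r.prem : Set (MAtom Λ ar ℕ)) ≠ ∅ →
          ∃ Δ ∈ r.concl, (⋂ p ∈ Δ, ρ p) ≠ ∅} := by
      refine ⟨⟨canon_monoNodup Γ, ?_⟩, ?_⟩
      · intro Δ hΔ p hp
        have hsub := Finset.mem_powerset.mp
          (Finset.mem_filter.mp (Finset.mem_toList.mp hΔ)).1
        exact varsF_seqVars (hsub hp)
      · intro Y ρ hne
        exact canon_sound T @Tmap lift hnat hmono X τ Γ hemp Y ρ hne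
    have himg : (canonPrem Γ).image (MAtom.rename (backR Γ.toList)) ⊆ Γ := by
      rw [canonPrem_image_back]
    obtain ⟨Δ, hΔ, hne⟩ := H _ hmemR (backR Γ.toList) himg
    exact hne (Finset.mem_filter.mp (Finset.mem_toList.mp hΔ)).2
  · -- contraction closure
    intro r hr σ
    obtain ⟨⟨hnd, hcv⟩, hsound⟩ := hr
    set P : Finset (MAtom Λ ar ℕ) := r.prem.image (MAtom.rename σ) with hPdef
    have hju : ∀ b ∈ P, ∃ j : Fin P.toList.length, P.toList.get j = b :=
      fun b hb => List.mem_iff_get.mp (Finset.mem_toList.mpr hb)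
    choose jf hjf using hju
    have hmemP : ∀ a ∈ r.prem, MAtom.rename σ a ∈ P :=
      fun a ha => Finset.mem_image_of_mem _ ha
    have hgex : ∀ p : ℕ, ∃ q : ℕ, ∀ a, ∀ ha : a ∈ r.prem, ∀ i : Fin (ar a.op),
        a.args i = p → q = Nat.pair (jf _ (hmemP a ha)).val i.val := by
      intro p
      by_cases h : ∃ a, a ∈ r.prem ∧ ∃ i, a.args i = p
      · obtain ⟨a, ha, i, hi⟩ := h
        refine ⟨Nat.pair (jf _ (hmemP a ha)).val i.val, ?_⟩
        intro a' ha' i' hi'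
        have hae : a' = a := prem_unique hnd ha' ha (hi'.trans hi.symm)
        subst hae
        have hie : i' = i := prem_args_inj hnd ha' (hi'.trans hi.symm)
        subst hie
        rfl
      · exact ⟨0, fun a ha i hi => absurd ⟨a, ha, i, hi⟩ h⟩
    choose g hg using hgex
    have hgj : ∀ a, ∀ ha : a ∈ r.prem, MAtom.rename g a =
        freshA (jf _ (hmemP a ha)).val (P.toList.get (jf _ (hmemP a ha))) := by
      intro a ha
      rw [hjf _ (hmemP a ha)]
      refine matom_ext ?_ ?_ ?_
      · rfl
      · rfl
      intro i k hik
      show g (a.args i) = Nat.pair (jf _ (hmemP a ha)).val k.val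
      rw [hg (a.args i) a ha i rfl, ← hik]
    have hgmem : ∀ a, ∀ ha : a ∈ r.prem, MAtom.rename g a ∈ canonPrem P :=
      fun a ha => (hgj a ha) ▸ mem_canonPrem.mpr ⟨jf _ (hmemP a ha), rfl⟩
    have hback : ∀ a, ∀ ha : a ∈ r.prem, ∀ i : Fin (ar a.op),
        backR P.toList (g (a.args i)) = σ (a.args i) := by
      intro a ha i
      have h1 : MAtom.rename (backR P.toList) (MAtom.rename g a) = MAtom.rename σ a := by
        rw [hgj a ha, rename_backR_freshA, hjf]
      have h2 := congrArg
        (fun x : MAtom Λ ar ℕ => if h : i.val < ar x.op then x.args ⟨i.val, h⟩ else 0) h1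
      have hlt : i.val < ar a.op := i.isLt
      simp only [MAtom.rename, Function.comp, hlt, dif_pos, Fin.eta] at h2
      exact (dif_pos hlt).symm.trans (h2.trans (dif_pos hlt))
    refine ⟨⟨canonPrem P, ((varsF P).powerset.filter
        fun Δ' => ∃ Δ ∈ r.concl, Δ.image σ ⊆ Δ'.image (backR P.toList)).toList⟩,
      ⟨⟨canon_monoNodup P, ?_⟩, ?_⟩, backR P.toList, ?_, ?_, ?_⟩
    · -- monotone: conclusion variables occur in the premise
      intro Δ hΔ p hp
      have hsub := Finset.mem_powerset.mp
        (Finset.mem_filter.mp (Finset.mem_toList.mp hΔ)).1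
      exact varsF_seqVars (hsub hp)
    · -- one-step soundness of the contracted rule
      intro Y ρ hne
      obtain ⟨t, ht⟩ := Set.nonempty_iff_ne_empty.mpr hne
      have ht' : t ∈ SeqSem T lift Y (fun p => ρ (g p)) (↑r.prem : Set (MAtom Λ ar ℕ)) := by
        rw [mem_seqSem]
        intro a ha
        have h3 : t ∈ AtomSem T lift Y ρ (MAtom.rename g a) :=
          mem_seqSem.mp ht _ (Finset.mem_coe.mpr (hgmem a (Finset.mem_coe.mp ha)))
        rwa [atomSem_rename] at h3
      obtain ⟨Δ, hΔ, hneΔ⟩ := hsound Y (fun p => ρ (g p))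
        (Set.nonempty_iff_ne_empty.mp ⟨t, ht'⟩)
      refine ⟨Δ.image g, ?_, ?_⟩
      · apply Finset.mem_toList.mpr
        apply Finset.mem_filter.mpr
        constructor
        · apply Finset.mem_powerset.mpr
          intro q hq
          obtain ⟨p, hp, rfl⟩ := Finset.mem_image.mp hq
          obtain ⟨a, ha, i, rfl⟩ := hcv Δ hΔ p hp
          exact mem_varsF.mpr ⟨MAtom.rename g a, hgmem a (Finset.mem_coe.mp ha), i, rfl⟩
        · refine ⟨Δ, hΔ, ?_⟩
          intro v hv
          obtain ⟨p, hp, rfl⟩ := Finset.mem_image.mp hv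
          obtain ⟨a, ha, i, rfl⟩ := hcv Δ hΔ p hp
          exact Finset.mem_image.mpr ⟨g (a.args i), Finset.mem_image_of_mem g hp,
            hback a (Finset.mem_coe.mp ha) i⟩
      · obtain ⟨x, hx⟩ := Set.nonempty_iff_ne_empty.mpr hneΔ
        apply Set.nonempty_iff_ne_empty.mp
        refine ⟨x, Set.mem_iInter₂.mpr fun q hq => ?_⟩
        obtain ⟨p, hp, rfl⟩ := Finset.mem_image.mp hq
        exact Set.mem_iInter₂.mp hx p hp
    · -- injectivity of the renaming on the contracted premise
      intro a ha b hb he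
      obtain ⟨j, rfl⟩ := mem_canonPrem.mp ha
      obtain ⟨k, rfl⟩ := mem_canonPrem.mp hb
      rw [rename_backR_freshA, rename_backR_freshA] at he
      have hjk : j = k := List.nodup_iff_injective_get.mp P.nodup_toList he
      rw [hjk]
    · -- instantiated premise inclusion
      rw [canonPrem_image_back]
    · -- conclusions are contained in conclusions of the contracted rule
      intro Δ hΔ
      have hincl : Δ.image σ ⊆
          ((varsF P).filter fun q => backR P.toList q ∈ Δ.image σ).image (backR P.toList) := by
        intro v hv
        obtain ⟨p, hp, rfl⟩ := Finset.mem_image.mp hv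
        obtain ⟨a, ha, i, rfl⟩ := hcv Δ hΔ p hp
        have hq : g (a.args i) ∈ varsF P :=
          mem_varsF.mpr ⟨MAtom.rename g a, hgmem a (Finset.mem_coe.mp ha), i, rfl⟩
        have hb := hback a (Finset.mem_coe.mp ha) i
        exact Finset.mem_image.mpr ⟨g (a.args i), Finset.mem_filter.mpr
          ⟨hq, by rw [hb]; exact Finset.mem_image_of_mem σ hp⟩, hb⟩
      refine ⟨(varsF P).filter fun q => backR P.toList q ∈ Δ.image σ,
        Finset.mem_toList.mpr (Finset.mem_filter.mpr
          ⟨Finset.mem_powerset.mpr (Finset.filter_subset _ _), Δ, hΔ, hincl⟩), hincl⟩
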